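/- Let A be a Lie affgebra with [a,a] = a for all a, and fix o ∈ A. Then [a,b]_v := [a,b] - b (difference in A_o) defines an antisymmetric bi-affine vector-valued bracket A × A → A_o. -/
import Mathlib


/-- An intrinsic affine space over a field `F`: a set with an abelian heap
operation `t` and scaled actions `act λ a b = λ ▷_a b` satisfying the axioms
of Brzeziński–Papworth. -/
structure AffSp (F : Type*) [Field F] (A : Type*) where
  t : A → A → A → A
  act : F → A → A → A
  t_assoc : ∀ a b c d e : A, t (t a b c) d e = t a b (t c d e)
  t_malcev : ∀ a b : A, t a a b = b
  t_symm : ∀ a b c : A, t a b c = t c b a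
  act_heap1 : ∀ (l m n : F) (a b : A),
    act (l - m + n) a b = t (act l a b) (act m a b) (act n a b)
  act_heap2 : ∀ (l : F) (a b c d : A),
    act l a (t b c d) = t (act l a b) (act l a c) (act l a d)
  act_mul : ∀ (l m : F) (a b : A), act (l * m) a b = act l a (act m a b)
  act_one : ∀ a b : A, act 1 a b = b
  act_zero : ∀ a b : A, act 0 a b = a
  base_change : ∀ (l : F) (a b c : A), act l a b = t (act l c b) (act l c a) a

/-- A Lie affgebra: an intrinsic affine space with a bi-affine bracket
satisfying the affine antisymmetry and affine Jacobi identities. -/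
structure LieAffgebra (F : Type*) [Field F] (A : Type*) extends AffSp F A where
  br : A → A → A
  br_left_t : ∀ a b c x : A, br (t a b c) x = t (br a x) (br b x) (br c x)
  br_left_act : ∀ (l : F) (a b x : A), br (act l a b) x = act l (br a x) (br b x)
  br_right_t : ∀ x a b c : A, br x (t a b c) = t (br x a) (br x b) (br x c)
  br_right_act : ∀ (l : F) (x a b : A), br x (act l a b) = act l (br x a) (br x b)
  br_antisym : ∀ a b : A, t (br a b) (br a a) (br b a) = br b b
  br_jacobi : ∀ a b c : A,
    t (br a (br b c)) (br a a) (t (br b (br c a)) (br b b) (br c (br a b))) = br c c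

/-- Let `A` be a Lie affgebra with `[a,a] = a` for all `a`, and fix `o ∈ A`.
Then `[a,b]_v := [a,b] - b` (difference in the group `A_o`, i.e.
`⟨[a,b], b, o⟩`) is an antisymmetric bi-affine vector-valued bracket
`A × A → A_o`. -/
theorem lie_affgebra_vector_valued_bracket
    {F A : Type*} [Field F] (L : LieAffgebra F A)
    (hidem : ∀ a : A, L.br a a = a) (o : A) :
    let neg : A → A := fun a => L.t o a o
    let brv : A → A → A := fun a b => L.t (L.br a b) b o  -- [a,b] - b in A_o
    -- bi-affine
    (∀ a b c x : A, brv (L.t a b c) x = L.t (brv a x) (brv b x) (brv c x)) ∧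
    (∀ (l : F) (a b x : A), brv (L.act l a b) x = L.act l (brv a x) (brv b x)) ∧
    (∀ x a b c : A, brv x (L.t a b c) = L.t (brv x a) (brv x b) (brv x c)) ∧
    (∀ (l : F) (x a b : A), brv x (L.act l a b) = L.act l (brv x a) (brv x b)) ∧
    -- antisymmetric
    (∀ a b : A, brv a b = neg (brv b a)) := by
  intro neg brv
  have h0 : ∀ a : A, L.t a o o = a := fun a => by
    rw [L.t_symm]; exact L.t_malcev o a
  letI : Zero A := ⟨o⟩
  letI : Add A := ⟨fun a b => L.t a o b⟩
  letI : Neg A := ⟨fun a => L.t o a o⟩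
  letI G : AddCommGroup A :=
  { add_assoc := fun a b c => L.t_assoc a o b o c
    zero_add := fun a => L.t_malcev o a
    add_zero := fun a => h0 a
    add_comm := fun a b => L.t_symm a o b
    neg_add_cancel := fun a => by
      show L.t (L.t o a o) o a = o
      rw [L.t_assoc, L.t_malcev, L.t_symm]
      exact L.t_malcev a o
    nsmul := nsmulRec
    zsmul := zsmulRec }
  have hadd : ∀ a b : A, a + b = L.t a o b := fun _ _ => rfl
  have hsub : ∀ a b : A, a - b = L.t a o (L.t o b o) := fun _ _ => rfl
  have ht : ∀ a b c : A, L.t a b c = a - b + c := by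
    intro a b c
    rw [hadd, hsub, L.t_assoc, L.t_assoc, L.t_malcev]
    conv_rhs => rw [← L.t_assoc, h0]
  have hself : ∀ (l : F) (a : A), L.act l a a = a := fun l a => by
    have h := L.base_change l a a a
    rwa [L.t_malcev] at h
  have hact : ∀ (l : F) (a b : A),
      L.act l a b = L.t (L.act l o b) (L.act l o a) a :=
    fun l a b => L.base_change l a b o
  refine ⟨?_, ?_, ?_, ?_, ?_⟩
  · intro a b c x
    show L.t (L.br (L.t a b c) x) x o
        = L.t (L.t (L.br a x) x o) (L.t (L.br b x) x o) (L.t (L.br c x) x o)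
    rw [L.br_left_t]
    simp only [ht]; abel
  · intro l a b x
    show L.t (L.br (L.act l a b) x) x o
        = L.act l (L.t (L.br a x) x o) (L.t (L.br b x) x o)
    rw [L.br_left_act,
      hact l (L.br a x) (L.br b x),
      hact l (L.t (L.br a x) x o) (L.t (L.br b x) x o),
      L.act_heap2, L.act_heap2, hself]
    simp only [ht]; abel
  · intro x a b c
    show L.t (L.br x (L.t a b c)) (L.t a b c) o
        = L.t (L.t (L.br x a) a o) (L.t (L.br x b) b o) (L.t (L.br x c) c o)
    rw [L.br_right_t]
    simp only [ht]; abel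
  · intro l x a b
    show L.t (L.br x (L.act l a b)) (L.act l a b) o
        = L.act l (L.t (L.br x a) a o) (L.t (L.br x b) b o)
    rw [L.br_right_act,
      hact l (L.br x a) (L.br x b),
      hact l a b,
      hact l (L.t (L.br x a) a o) (L.t (L.br x b) b o),
      L.act_heap2, L.act_heap2, hself]
    simp only [ht]; abel
  · intro a b
    show L.t (L.br a b) b o = L.t o (L.t (L.br b a) a o) o
    have h := L.br_antisym a b
    rw [hidem, hidem] at h
    rw [ht] at h
    have h1 : L.br a b + L.br b a = a + b := by
      rw [sub_add_eq_add_sub, sub_eq_iff_eq_add] at h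
      exact h.trans (add_comm b a)
    have key : L.br a b - b = a - L.br b a := sub_eq_sub_iff_add_eq_add.mpr h1
    simp only [ht]
    rw [key]; abel
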